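/- For all α, β ∈ F, N_α · N_β = q² · I_{q(q+2)} ⊗ φ(α+β) + q · I_{q+2} ⊗ φ(α+β) ⊗ J_q + q · (J_{q(q+2)} − I_{q(q+2)}) ⊗ J_q. -/

import Mathlib

open Matrix Kronecker

/-- The `q × q` permutation matrix `φ(α)` with `(x,y)`-entry `1` iff `y = x + α`. -/
noncomputable def phi {F : Type*} [Add F] [DecidableEq F] (α : F) : Matrix F F ℝ :=
  Matrix.of fun x y => if y = x + α then (1 : ℝ) else 0

/-- The all-ones matrix. -/
noncomputable def Jmat (n : Type*) : Matrix n n ℝ :=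
  Matrix.of fun _ _ => (1 : ℝ)

/-- The auxiliary matrix `C_{a,α'}` with `((β,x),(β',y))`-entry `1` iff
`y = x + a(β+β') + α'`. -/
noncomputable def Cmat {F : Type*} [Field F] [DecidableEq F] (a α' : F) :
    Matrix (F × F) (F × F) ℝ :=
  Matrix.of fun p p' => if p'.2 = p.2 + a * (p.1 + p'.1) + α' then (1 : ℝ) else 0

/-- Embedding of `F ∪ {y}` into `S = F ∪ {x, y}`, coded as `Option F → F ⊕ Bool`
(`none ↦ y = Sum.inr true`; the symbol `x` is `Sum.inr false`). -/
def emb {F : Type*} : Option F → F ⊕ Bool :=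
  fun o => o.elim (Sum.inr true) Sum.inl

/-- `C_{a,α}` for `a ∈ F ∪ {y}`, where `C_{y,α} = φ(α) ⊗ J_q`. -/
noncomputable def CmatE {F : Type*} [Field F] [DecidableEq F] (a : Option F) (α : F) :
    Matrix (F × F) (F × F) ℝ :=
  a.elim (phi α ⊗ₖ Jmat F) (fun b => Cmat b α)

/-- `N_α = Σ_{a ∈ F ∪ {y}} P_a ⊗ C_{a,α}`. -/
noncomputable def Nmat {F : Type*} [Field F] [Fintype F] [DecidableEq F]
    (P : F ⊕ Bool → Matrix (F ⊕ Bool) (F ⊕ Bool) ℝ) (α : F) :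
    Matrix ((F ⊕ Bool) × F × F) ((F ⊕ Bool) × F × F) ℝ :=
  ∑ a : Option F, P (emb a) ⊗ₖ CmatE a α

set_option linter.unusedSectionVars false

section helpers
variable {l m n p : Type*}

lemma kron_sub_left (A B : Matrix l m ℝ) (C : Matrix n p ℝ) :
    (A - B) ⊗ₖ C = A ⊗ₖ C - B ⊗ₖ C := by
  ext ⟨i,j⟩ ⟨k,r⟩; simp [Matrix.kroneckerMap_apply, sub_mul]

lemma kron_sub_right (A : Matrix l m ℝ) (B C : Matrix n p ℝ) :
    A ⊗ₖ (B - C) = A ⊗ₖ B - A ⊗ₖ C := by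
  ext ⟨i,j⟩ ⟨k,r⟩; simp [Matrix.kroneckerMap_apply, mul_sub]

lemma kron_add_right (A : Matrix l m ℝ) (B C : Matrix n p ℝ) :
    A ⊗ₖ (B + C) = A ⊗ₖ B + A ⊗ₖ C := by
  ext ⟨i,j⟩ ⟨k,r⟩; simp [Matrix.kroneckerMap_apply, mul_add]

lemma kron_sum_left {ι : Type*} (s : Finset ι) (f : ι → Matrix l m ℝ) (C : Matrix n p ℝ) :
    (∑ a ∈ s, f a) ⊗ₖ C = ∑ a ∈ s, f a ⊗ₖ C := by
  ext ⟨i,j⟩ ⟨k,r⟩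
  simp [Matrix.kroneckerMap_apply, Finset.sum_mul, Matrix.sum_apply]

lemma kron_sum_right {ι : Type*} (s : Finset ι) (A : Matrix l m ℝ) (f : ι → Matrix n p ℝ) :
    A ⊗ₖ (∑ a ∈ s, f a) = ∑ a ∈ s, A ⊗ₖ f a := by
  ext ⟨i,j⟩ ⟨k,r⟩
  simp [Matrix.kroneckerMap_apply, Finset.mul_sum, Matrix.sum_apply]
end helpers

section Flem
variable {F : Type*} [Field F] [Fintype F] [DecidableEq F]

lemma phi_mul (α β : F) : phi α * phi β = phi (α + β) := by
  ext x y
  simp only [phi, Matrix.mul_apply, Matrix.of_apply]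
  rw [Finset.sum_eq_single (x + α)]
  · simp [add_assoc]
  · intro b _ hb; simp [hb]
  · simp

lemma Jmul (G : Type*) [Fintype G] : Jmat G * Jmat G = (Fintype.card G : ℝ) • Jmat G := by
  ext x y
  simp [Jmat, Matrix.mul_apply]

lemma JJ : Jmat F ⊗ₖ Jmat F = Jmat (F × F) := by
  ext ⟨i,j⟩ ⟨k,r⟩; simp [Jmat, Matrix.kroneckerMap_apply]

lemma sum_unique (u : F) (hu : u ≠ 0) (w K : F) :
    ∑ γ : F, (if w = K + u * γ then (1:ℝ) else 0) = 1 := by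
  rw [Finset.sum_eq_single (u⁻¹ * (w - K))]
  · rw [if_pos]; field_simp; ring
  · intro b _ hb
    rw [if_neg]
    intro h
    apply hb
    have hub : u * b = w - K := by linear_combination -h
    rw [← hub, inv_mul_cancel_left₀ hu]
  · simp

variable (h2 : ∀ x : F, x + x = 0)
include h2

lemma char_ne {a b : F} (hab : a ≠ b) : a + b ≠ 0 := by
  intro h; apply hab
  have := h2 b
  linear_combination h - this

lemma Cmat_mul_self (a α β : F) :
    Cmat a α * Cmat a β = (Fintype.card F : ℝ) • Cmat a (α + β) := by
  ext p p'
  simp only [Cmat, Matrix.mul_apply, Matrix.of_apply, Matrix.smul_apply, smul_eq_mul]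
  rw [Fintype.sum_prod_type]
  have inner : ∀ γ : F, ∑ z : F,
      (if z = p.2 + a * (p.1 + γ) + α then (1:ℝ) else 0) *
        (if p'.2 = z + a * (γ + p'.1) + β then (1:ℝ) else 0)
      = if p'.2 = p.2 + a * (p.1 + p'.1) + (α + β) then (1:ℝ) else 0 := by
    intro γ
    rw [Finset.sum_eq_single (p.2 + a * (p.1 + γ) + α)]
    · rw [if_pos rfl, one_mul]
      congr 1
      have key : p.2 + a * (p.1 + γ) + α + a * (γ + p'.1) + β
          = p.2 + a * (p.1 + p'.1) + (α + β) := by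
        linear_combination h2 (a * γ)
      rw [key]
    · intro b _ hb; simp [hb]
    · simp
  rw [Finset.sum_congr rfl (fun γ _ => inner γ)]
  simp [Finset.sum_ite_eq]

lemma Cmat_mul_ne {a b : F} (hab : a ≠ b) (α β : F) :
    Cmat a α * Cmat b β = Jmat (F × F) := by
  ext p p'
  simp only [Cmat, Jmat, Matrix.mul_apply, Matrix.of_apply]
  rw [Fintype.sum_prod_type]
  have inner : ∀ γ : F, ∑ z : F,
      (if z = p.2 + a * (p.1 + γ) + α then (1:ℝ) else 0) *
        (if p'.2 = z + b * (γ + p'.1) + β then (1:ℝ) else 0)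
      = if p'.2 = (p.2 + a * p.1 + b * p'.1 + α + β) + (a + b) * γ then (1:ℝ) else 0 := by
    intro γ
    rw [Finset.sum_eq_single (p.2 + a * (p.1 + γ) + α)]
    · rw [if_pos rfl, one_mul]
      congr 2
      ring
    · intro c _ hc; simp [hc]
    · simp
  rw [Finset.sum_congr rfl (fun γ _ => inner γ)]
  exact sum_unique (a + b) (char_ne h2 hab) _ _

lemma Cmat_mul_ky (a α β : F) :
    Cmat a α * (phi β ⊗ₖ Jmat F) = Jmat (F × F) := by
  ext p p'
  simp only [Cmat, Jmat, phi, Matrix.mul_apply, Matrix.of_apply, Matrix.kroneckerMap_apply]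
  rw [Fintype.sum_prod_type]
  have inner : ∀ γ : F, ∑ z : F,
      (if z = p.2 + a * (p.1 + γ) + α then (1:ℝ) else 0) *
        ((if p'.1 = γ + β then (1:ℝ) else 0) * 1)
      = if p'.1 = γ + β then (1:ℝ) else 0 := by
    intro γ
    rw [Finset.sum_eq_single (p.2 + a * (p.1 + γ) + α)]
    · simp
    · intro c _ hc; simp [hc]
    · simp
  rw [Finset.sum_congr rfl (fun γ _ => inner γ)]
  rw [Finset.sum_eq_single (p'.1 - β)]
  · rw [if_pos]; ring_nf
  · intro c _ hc
    rw [if_neg]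
    intro h; apply hc; rw [h]; ring
  · simp

lemma ky_mul_Cmat (a α β : F) :
    (phi β ⊗ₖ Jmat F) * Cmat a α = Jmat (F × F) := by
  ext p p'
  simp only [Cmat, Jmat, phi, Matrix.mul_apply, Matrix.of_apply, Matrix.kroneckerMap_apply]
  rw [Fintype.sum_prod_type]
  have inner : ∀ γ : F, ∑ z : F,
      (if γ = p.1 + β then (1:ℝ) else 0) * 1 *
        (if p'.2 = z + a * (γ + p'.1) + α then (1:ℝ) else 0)
      = if γ = p.1 + β then (1:ℝ) else 0 := by
    intro γ
    rw [← Finset.mul_sum, Finset.sum_eq_single (p'.2 - (a * (γ + p'.1) + α))]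
    · have hz : p'.2 = p'.2 - (a * (γ + p'.1) + α) + a * (γ + p'.1) + α := by ring
      rw [if_pos hz, mul_one, mul_one]
    · intro c _ hc
      rw [if_neg]
      intro h; apply hc; rw [h]; ring
    · simp
  rw [Finset.sum_congr rfl (fun γ _ => inner γ)]
  simp

omit h2 in
lemma ky_mul_ky (α β : F) :
    (phi α ⊗ₖ Jmat F) * (phi β ⊗ₖ Jmat F)
      = (Fintype.card F : ℝ) • (phi (α + β) ⊗ₖ Jmat F) := by
  rw [← Matrix.mul_kronecker_mul, phi_mul, Jmul, Matrix.kronecker_smul]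

lemma sum_CmatF (γ : F) :
    ∑ a : F, Cmat a γ = (Fintype.card F : ℝ) • ((1 : Matrix F F ℝ) ⊗ₖ phi γ)
      + (Jmat F ⊗ₖ Jmat F - (1 : Matrix F F ℝ) ⊗ₖ Jmat F) := by
  ext p p'
  simp only [Matrix.sum_apply, Cmat, Jmat, phi, Matrix.of_apply, Matrix.add_apply,
    Matrix.sub_apply, Matrix.smul_apply, Matrix.kroneckerMap_apply, Matrix.one_apply,
    smul_eq_mul]
  by_cases h : p.1 = p'.1
  · simp only [h, h2 p'.1, mul_zero, add_zero, eq_self_iff_true, if_true]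
    rw [Finset.sum_const, Finset.card_univ]
    by_cases hy : p'.2 = p.2 + γ <;> simp [hy, nsmul_eq_mul]
  · have hu : p.1 + p'.1 ≠ 0 := char_ne h2 h
    have key : ∀ a : F, p.2 + a * (p.1 + p'.1) + γ = (p.2 + γ) + (p.1 + p'.1) * a := by
      intro a; ring
    simp only [key]
    rw [sum_unique (p.1 + p'.1) hu p'.2 (p.2 + γ)]
    simp [h]

lemma sum_CmatE (γ : F) :
    ∑ a : Option F, CmatE a γ
      = phi γ ⊗ₖ Jmat F + ((Fintype.card F : ℝ) • ((1 : Matrix F F ℝ) ⊗ₖ phi γ)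
        + (Jmat F ⊗ₖ Jmat F - (1 : Matrix F F ℝ) ⊗ₖ Jmat F)) := by
  rw [Fintype.sum_option]
  congr 1
  exact sum_CmatF h2 γ

lemma CmatE_mul_self (a : Option F) (α β : F) :
    CmatE a α * CmatE a β = (Fintype.card F : ℝ) • CmatE a (α + β) := by
  cases a with
  | none => exact ky_mul_ky α β
  | some a => exact Cmat_mul_self h2 a α β

lemma CmatE_mul_ne {a b : Option F} (hab : a ≠ b) (α β : F) :
    CmatE a α * CmatE b β = Jmat (F × F) := by
  cases a with
  | none =>
    cases b with
    | none => exact absurd rfl hab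
    | some b => exact ky_mul_Cmat h2 b β α
  | some a =>
    cases b with
    | none => exact Cmat_mul_ky h2 a α β
    | some b =>
      refine Cmat_mul_ne h2 (fun h => hab ?_) α β
      rw [h]

end Flem

set_option linter.unusedTactic false

/-- `N_α·N_β = q²·I_{q(q+2)}⊗φ(α+β) + q·I_{q+2}⊗φ(α+β)⊗J_q + q·(J_{q(q+2)} − I_{q(q+2)})⊗J_q`,
where `I_{q(q+2)} = I_{q+2}⊗I_q` and `J_{q(q+2)} = J_{q+2}⊗J_q` under the natural
association of indices. -/
theorem stmt6 {F : Type*} [Field F] [Fintype F] [DecidableEq F]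
    (m : ℕ) (hm : 1 ≤ m) (hF : Fintype.card F = 2 ^ m)
    (P : F ⊕ Bool → Matrix (F ⊕ Bool) (F ⊕ Bool) ℝ)
    (hPsymm : ∀ a, (P a)ᵀ = P a)
    (hP01 : ∀ a i j, P a i j = 0 ∨ P a i j = 1)
    (hPperm : ∀ a, P a * (P a)ᵀ = 1)
    (hPx : P (Sum.inr false) = 1)
    (hPsum : ∑ a : F ⊕ Bool, P a = Jmat (F ⊕ Bool)) (α β : F) :
    Nmat P α * Nmat P β =
      ((2 ^ m : ℝ)) ^ 2 •
          ((1 : Matrix (F ⊕ Bool) (F ⊕ Bool) ℝ) ⊗ₖ ((1 : Matrix F F ℝ) ⊗ₖ phi (α + β))) +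
        (2 ^ m : ℝ) • ((1 : Matrix (F ⊕ Bool) (F ⊕ Bool) ℝ) ⊗ₖ (phi (α + β) ⊗ₖ Jmat F)) +
        (2 ^ m : ℝ) • (Jmat (F ⊕ Bool) ⊗ₖ (Jmat F ⊗ₖ Jmat F) -
          (1 : Matrix (F ⊕ Bool) (F ⊕ Bool) ℝ) ⊗ₖ ((1 : Matrix F F ℝ) ⊗ₖ Jmat F)) := by
  -- char 2
  have h2 : ∀ x : F, x + x = 0 := by
    have hc : ((Fintype.card F : ℕ) : F) = 0 := FiniteField.cast_card_eq_zero F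
    rw [hF] at hc
    push_cast at hc
    have h20 : (2 : F) = 0 := by
      have := (pow_eq_zero_iff (Nat.one_le_iff_ne_zero.mp hm)).mp hc
      exact this
    intro x
    rw [← two_mul, h20, zero_mul]
  set q : ℝ := (Fintype.card F : ℝ) with hq
  have hq2 : ((2 : ℝ)) ^ m = q := by rw [hq, hF]; push_cast; ring
  have hPa : ∀ a : Option F, P (emb a) * P (emb a) = 1 := by
    intro a
    have := hPperm (emb a)
    rwa [hPsymm] at this
  -- sum of P over Option F
  have sumP : ∑ a : Option F, P (emb a) = Jmat (F ⊕ Bool) - 1 := by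
    have h := hPsum
    rw [Fintype.sum_sum_type, Fintype.sum_bool, hPx] at h
    rw [Fintype.sum_option]
    simp only [emb, Option.elim]
    rw [← h]; abel
  -- expand the product
  rw [Nmat, Nmat, Finset.sum_mul_sum]
  have expand : ∀ a b : Option F,
      (P (emb a) ⊗ₖ CmatE a α) * (P (emb b) ⊗ₖ CmatE b β)
        = (P (emb a) * P (emb b)) ⊗ₖ Jmat (F × F)
          + (if a = b then
              (1 : Matrix (F ⊕ Bool) (F ⊕ Bool) ℝ) ⊗ₖ (q • CmatE b (α + β) - Jmat (F × F))
            else 0) := by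
    intro a b
    rw [← Matrix.mul_kronecker_mul]
    by_cases hab : a = b
    · subst hab
      rw [if_pos rfl, CmatE_mul_self h2, hPa a, kron_sub_right]
      abel
    · rw [if_neg hab, add_zero, CmatE_mul_ne h2 hab]
  rw [Finset.sum_congr rfl (fun a _ => Finset.sum_congr rfl (fun b _ => expand a b))]
  simp only [Finset.sum_add_distrib, Finset.sum_ite_eq, Finset.mem_univ, if_true]
  -- first double sum
  have S1 : ∑ a : Option F, ∑ b : Option F, (P (emb a) * P (emb b)) ⊗ₖ Jmat (F × F)
      = (q • Jmat (F ⊕ Bool) + 1) ⊗ₖ Jmat (F × F) := by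
    have e1 : ∀ a : Option F,
        ∑ b : Option F, (P (emb a) * P (emb b)) ⊗ₖ Jmat (F × F)
          = (P (emb a) * (Jmat (F ⊕ Bool) - 1)) ⊗ₖ Jmat (F × F) := by
      intro a
      rw [← kron_sum_left, ← Finset.mul_sum, sumP]
    rw [Finset.sum_congr rfl (fun a _ => e1 a), ← kron_sum_left, ← Finset.sum_mul, sumP]
    have hcS : (Fintype.card (F ⊕ Bool) : ℝ) = q + 2 := by
      simp [hq, Fintype.card_sum]
    rw [sub_mul, mul_sub, mul_sub, Jmul, mul_one, one_mul, mul_one, hcS]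
    have hmod : (q + 2) • Jmat (F ⊕ Bool) - Jmat (F ⊕ Bool) - (Jmat (F ⊕ Bool) - 1)
        = q • Jmat (F ⊕ Bool) + (1 : Matrix (F ⊕ Bool) (F ⊕ Bool) ℝ) := by module
    rw [hmod]
  rw [S1]
  -- second sum
  have S2 : ∑ a : Option F,
      (1 : Matrix (F ⊕ Bool) (F ⊕ Bool) ℝ) ⊗ₖ (q • CmatE a (α + β) - Jmat (F × F))
      = (1 : Matrix (F ⊕ Bool) (F ⊕ Bool) ℝ) ⊗ₖ
          (q • (∑ a : Option F, CmatE a (α + β)) - (q + 1) • Jmat (F × F)) := by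
    rw [← kron_sum_right]
    congr 1
    rw [Finset.sum_sub_distrib, ← Finset.smul_sum, Finset.sum_const, Finset.card_univ,
      Fintype.card_option]
    congr 1
    rw [← Nat.cast_smul_eq_nsmul ℝ]
    congr 1
    push_cast [hF]
    rw [hq, hF]
    push_cast
    ring
  rw [S2, sum_CmatE h2, ← JJ, hq2]
  simp only [kron_sub_right, kron_add_right, Matrix.add_kronecker, kron_sub_left,
    Matrix.smul_kronecker, Matrix.kronecker_smul, smul_sub, smul_add, smul_smul]
  module
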